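/- arXiv:2209.02357 — 3 statements merged into one kernel-verified Lean document; each statement's English description precedes it below -/
import Mathlib

section
/- Let (C,∇,g,θ) be a compact radiant l.c.H. manifold with Lee vector field ξ, ∇ξ = μ·Id for a constant μ, and a = g(ξ,ξ). Set u = −μ − a. Then u ≠ 0 and u·g = ∇θ − θ⊗θ, where ∇θ denotes the covariant derivative of the Lee form (∇θ)(X,Y) = X(θ(Y)) − θ(∇_X Y). -/
open Bundle Set TopologicalSpace
open scoped Manifold Topology

noncomputable section

namespace LCH

variable {E : Type*} [NormedAddCommGroup E] [NormedSpace ℝ E]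
  {H : Type*} [TopologicalSpace H] (I : ModelWithCorners ℝ E H)
  (M : Type*) [TopologicalSpace M] [ChartedSpace H M] [IsManifold I (⊤ : ℕ∞) M]

/-- A vector field on a manifold: an assignment of tangent vectors to points. -/
abbrev VectorField : Type _ := ∀ x : M, TangentSpace I x

variable {M}

/-- A vector field is smooth if it is smooth as a section of the tangent bundle. -/
def IsSmoothVF (X : VectorField I M) : Prop :=
  ContMDiff I I.tangent (⊤ : ℕ∞) (fun x => (⟨x, X x⟩ : TangentBundle I M))

/-- A real valued function on a manifold is smooth. -/
def IsSmoothF (f : M → ℝ) : Prop := ContMDiff I 𝓘(ℝ) (⊤ : ℕ∞) f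

/-- The derivative of a function along a vector field. -/
def dirDeriv (X : VectorField I M) (f : M → ℝ) : M → ℝ :=
  fun x => mfderiv I 𝓘(ℝ) f x (X x)

/-- `B` is the Lie bracket `[X, Y]` of the vector fields `X` and `Y`:
it acts on smooth functions as the commutator of `X` and `Y`. -/
def IsBracket (X Y B : VectorField I M) : Prop :=
  ∀ f : M → ℝ, IsSmoothF I f →
    dirDeriv I B f = fun x => dirDeriv I X (dirDeriv I Y f) x - dirDeriv I Y (dirDeriv I X f) x

variable (M)

/-- An affine connection on a manifold, acting on vector fields. -/
structure Connection where
  op : VectorField I M → VectorField I M → VectorField I M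
  smooth : ∀ X Y, IsSmoothVF I X → IsSmoothVF I Y → IsSmoothVF I (op X Y)
  add_left : ∀ X X' Y, op (fun x => X x + X' x) Y = fun x => op X Y x + op X' Y x
  fsmul_left : ∀ (f : M → ℝ) (X Y), op (fun x => f x • X x) Y = fun x => f x • op X Y x
  add_right : ∀ X Y Y', op X (fun x => Y x + Y' x) = fun x => op X Y x + op X Y' x
  leibniz : ∀ (f : M → ℝ) (X Y), IsSmoothF I f →
    op X (fun x => f x • Y x) = fun x => f x • op X Y x + dirDeriv I X f x • Y x

/-- A Riemannian metric: a smooth positive definite symmetric bilinear form on each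
tangent space. -/
structure RiemannianMetric where
  val : ∀ x : M, TangentSpace I x → TangentSpace I x → ℝ
  smooth : ∀ X Y : VectorField I M, IsSmoothVF I X → IsSmoothVF I Y →
    IsSmoothF I (fun x => val x (X x) (Y x))
  symm : ∀ x u v, val x u v = val x v u
  add_left : ∀ x u u' v, val x (u + u') v = val x u v + val x u' v
  smul_left : ∀ x (c : ℝ) u v, val x (c • u) v = c * val x u v
  posdef : ∀ x v, v ≠ 0 → 0 < val x v v

/-- A 1-form on a manifold. -/
structure OneForm where
  val : ∀ x : M, TangentSpace I x → ℝ
  smooth : ∀ X : VectorField I M, IsSmoothVF I X → IsSmoothF I (fun x => val x (X x))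
  add : ∀ x u v, val x (u + v) = val x u + val x v
  smul : ∀ x (c : ℝ) v, val x (c • v) = c * val x v

variable {I M}

/-- A connection is torsion-free if `∇_X Y - ∇_Y X = [X, Y]`. -/
def Connection.IsTorsionFree (C : Connection I M) : Prop :=
  ∀ X Y, IsSmoothVF I X → IsSmoothVF I Y →
    IsBracket I X Y (fun x => C.op X Y x - C.op Y X x)

/-- A connection is flat (has identically vanishing curvature tensor):
`∇_X ∇_Y Z - ∇_Y ∇_X Z - ∇_[X,Y] Z = 0`. -/
def Connection.IsFlat (C : Connection I M) : Prop :=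
  ∀ X Y Z B, IsSmoothVF I X → IsSmoothVF I Y → IsSmoothVF I Z → IsBracket I X Y B →
    ∀ x, C.op X (C.op Y Z) x - C.op Y (C.op X Z) x - C.op B Z x = 0

/-- A flat affine structure: a flat torsion-free affine connection. -/
def Connection.IsFlatAffine (C : Connection I M) : Prop :=
  C.IsTorsionFree ∧ C.IsFlat

/-- The covariant derivative `(∇g)(X, Y, Z)` of a metric `g` with respect to a
connection `∇`:  `(∇g)(X,Y,Z) = X(g(Y,Z)) - g(∇_X Y, Z) - g(Y, ∇_X Z)`. -/
def covDerivMetric (C : Connection I M) (g : RiemannianMetric I M)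
    (X Y Z : VectorField I M) : M → ℝ :=
  fun x => dirDeriv I X (fun y => g.val y (Y y) (Z y)) x
    - g.val x (C.op X Y x) (Z x) - g.val x (Y x) (C.op X Z x)

/-- The covariant derivative `(∇θ)(X, Y) = X(θ(Y)) - θ(∇_X Y)` of a 1-form. -/
def covDerivOneForm (C : Connection I M) (θ : OneForm I M)
    (X Y : VectorField I M) : M → ℝ :=
  fun x => dirDeriv I X (fun y => θ.val y (Y y)) x - θ.val x (C.op X Y x)

/-- A (0,3)-tensor given on triples of vector fields is totally symmetric. -/
def IsTotallySymmetric (T : VectorField I M → VectorField I M → VectorField I M → M → ℝ) :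
    Prop :=
  ∀ X Y Z, IsSmoothVF I X → IsSmoothVF I Y → IsSmoothVF I Z →
    T X Y Z = T Y X Z ∧ T X Y Z = T X Z Y

/-- A Hessian structure: a flat affine connection together with a Riemannian
metric whose covariant derivative is totally symmetric. -/
def IsHessian (C : Connection I M) (g : RiemannianMetric I M) : Prop :=
  C.IsFlatAffine ∧ IsTotallySymmetric (covDerivMetric C g)

/-- A 1-form is closed: `dθ(X,Y) = X(θ(Y)) - Y(θ(X)) - θ([X,Y]) = 0`. -/
def OneForm.IsClosed (θ : OneForm I M) : Prop :=
  ∀ X Y B, IsSmoothVF I X → IsSmoothVF I Y → IsBracket I X Y B →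
    ∀ x, dirDeriv I X (fun y => θ.val y (Y y)) x - dirDeriv I Y (fun y => θ.val y (X y)) x
      - θ.val x (B x) = 0

/-- A locally conformally Hessian structure: a flat affine connection `∇`, a
Riemannian metric `g` and a closed 1-form `θ` such that `∇g - θ ⊗ g` is totally
symmetric. -/
def IsLcH (C : Connection I M) (g : RiemannianMetric I M) (θ : OneForm I M) : Prop :=
  C.IsFlatAffine ∧ θ.IsClosed ∧
    IsTotallySymmetric (fun X Y Z x => covDerivMetric C g X Y Z x
      - θ.val x (X x) * g.val x (Y x) (Z x))

/-- `ξ` is the Lee vector field of the l.c.H. structure: the `g`-dual of `θ`. -/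
def IsLeeField (g : RiemannianMetric I M) (θ : OneForm I M) (ξ : VectorField I M) : Prop :=
  IsSmoothVF I ξ ∧ ∀ x v, g.val x (ξ x) v = θ.val x v

/-- The Lie derivative of the metric `g` along the vector field `ξ` equals `c • g`:
`ξ(g(X,Y)) = g([ξ,X],Y) + g(X,[ξ,Y]) + c g(X,Y)` for all smooth `X`, `Y`. -/
def LieDerivMetricEq (g : RiemannianMetric I M) (ξ : VectorField I M) (c : ℝ) : Prop :=
  ∀ X Y BX BY, IsSmoothVF I X → IsSmoothVF I Y →
    IsBracket I ξ X BX → IsBracket I ξ Y BY →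
    ∀ x, dirDeriv I ξ (fun y => g.val y (X y) (Y y)) x
      = g.val x (BX x) (Y x) + g.val x (X x) (BY x) + c * g.val x (X x) (Y x)

/-- A vector field is Killing: the Lie derivative of the metric along it vanishes. -/
def IsKilling (g : RiemannianMetric I M) (ξ : VectorField I M) : Prop :=
  LieDerivMetricEq g ξ 0

/-- A vector field is affine: its flow preserves the connection, i.e. the Lie
derivative of the connection along it vanishes:
`[ξ, ∇_X Y] = ∇_[ξ,X] Y + ∇_X [ξ,Y]`. -/
def IsAffineField (C : Connection I M) (ξ : VectorField I M) : Prop :=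
  ∀ X Y B BX BY, IsSmoothVF I X → IsSmoothVF I Y →
    IsBracket I ξ (C.op X Y) B → IsBracket I ξ X BX → IsBracket I ξ Y BY →
    ∀ x, B x = C.op BX Y x + C.op X BY x

/-- `∇ ξ = μ · Id`. -/
def NablaEqSmulId (C : Connection I M) (ξ : VectorField I M) (μ : ℝ) : Prop :=
  ∀ X, IsSmoothVF I X → C.op X ξ = fun x => μ • X x

/-- A self-similar Hessian structure: a Hessian structure with a smooth affine
vector field `ξ` such that `L_ξ g = 2 g`. -/
def IsSelfSimilarHessian (C : Connection I M) (g : RiemannianMetric I M)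
    (ξ : VectorField I M) : Prop :=
  IsHessian C g ∧ IsSmoothVF I ξ ∧ IsAffineField C ξ ∧ LieDerivMetricEq g ξ 2

/-- A radiant Hessian structure: a self-similar Hessian structure with
`∇ ξ = λ · Id` for a constant `λ`. -/
def IsRadiantHessian (C : Connection I M) (g : RiemannianMetric I M)
    (ξ : VectorField I M) (lam : ℝ) : Prop :=
  IsSelfSimilarHessian C g ξ ∧ NablaEqSmulId C ξ lam

/-- A radiant l.c.H. structure: an l.c.H. structure whose Lee vector field `ξ` is
Killing and satisfies `∇ ξ = μ · Id` for a constant `μ ∉ {-a, 0}`, where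
`a = g(ξ,ξ)` is the (constant) squared norm of the Lee field. -/
def IsRadiantLcH (C : Connection I M) (g : RiemannianMetric I M) (θ : OneForm I M)
    (ξ : VectorField I M) (a μ : ℝ) : Prop :=
  IsLcH C g θ ∧ IsLeeField g θ ξ ∧ IsKilling g ξ ∧
    (∀ x, g.val x (ξ x) (ξ x) = a) ∧ μ ≠ 0 ∧ μ ≠ -a ∧ NablaEqSmulId C ξ μ

/-- A statistical structure: a torsion-free connection `D` and a Riemannian metric `g`
such that `Dg` is totally symmetric. -/
def IsStatistical (D : Connection I M) (g : RiemannianMetric I M) : Prop :=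
  D.IsTorsionFree ∧ IsTotallySymmetric (covDerivMetric D g)

/-- A statistical structure has constant curvature `c`:
`Θ_D(X,Y)Z = c (g(Y,Z) X - g(X,Z) Y)`. -/
def HasConstantCurvature (D : Connection I M) (g : RiemannianMetric I M) (c : ℝ) : Prop :=
  ∀ X Y Z B, IsSmoothVF I X → IsSmoothVF I Y → IsSmoothVF I Z → IsBracket I X Y B →
    ∀ x, D.op X (D.op Y Z) x - D.op Y (D.op X Z) x - D.op B Z x
      = c • (g.val x (Y x) (Z x) • X x - g.val x (X x) (Z x) • Y x)

section TwoManifolds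

variable {E' : Type*} [NormedAddCommGroup E'] [NormedSpace ℝ E']
  {H' : Type*} [TopologicalSpace H'] {I' : ModelWithCorners ℝ E' H'}
  {N : Type*} [TopologicalSpace N] [ChartedSpace H' N] [IsManifold I' (⊤ : ℕ∞) N]

/-- The vector fields `X` on `M` and `X'` on `N` are `φ`-related
(`dφ (X x) = X' (φ x)`). -/
def Related (φ : M → N) (X : VectorField I M) (X' : VectorField I' N) : Prop :=
  ∀ x, mfderiv I I' φ x (X x) = X' (φ x)

end TwoManifolds

/-- A diffeomorphism preserves a Riemannian metric. -/
def PreservesMetric (φ : M → M) (g : RiemannianMetric I M) : Prop :=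
  ∀ x (v w : TangentSpace I x),
    g.val (φ x) (mfderiv I I φ x v) (mfderiv I I φ x w) = g.val x v w

/-- A diffeomorphism preserves a connection: it maps `φ`-related pairs of vector
fields to `φ`-related covariant derivatives. -/
def PreservesConnection (φ : M → M) (C : Connection I M) : Prop :=
  ∀ X Y X' Y', IsSmoothVF I X → IsSmoothVF I Y →
    Related φ X X' → Related φ Y Y' →
    Related φ (C.op X Y) (C.op X' Y')

/-- A 1-form is preserved by a diffeomorphism. -/
def PreservesOneForm (φ : M → M) (θ : OneForm I M) : Prop :=
  ∀ x (v : TangentSpace I x), θ.val (φ x) (mfderiv I I φ x v) = θ.val x v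

/-- An automorphism of a statistical manifold `(M, D, g)`: a diffeomorphism of `M`
preserving both `D` and `g`. -/
def IsStatAutomorphism (D : Connection I M) (g : RiemannianMetric I M) (φ : M → M) : Prop :=
  ContMDiff I I (⊤ : ℕ∞) φ ∧
    (∃ ψ : M → M, ContMDiff I I (⊤ : ℕ∞) ψ ∧ Function.LeftInverse ψ φ ∧
      Function.RightInverse ψ φ) ∧
    PreservesMetric φ g ∧ PreservesConnection φ D

/-- The positive half-line `ℝ^{>0}`, as an open submanifold of `ℝ`. -/
abbrev Rpos : Opens ℝ := ⟨Set.Ioi 0, isOpen_Ioi⟩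

variable (I M) in
/-- The vector field `s ∂/∂s` on the product `M × ℝ^{>0}`. -/
def radField : VectorField (I.prod 𝓘(ℝ)) (M × ↥Rpos) :=
  fun p => ((0 : E), (p.2 : ℝ))

/-- `g_N` is the cone metric `s² g_M + ds²` on `M × ℝ^{>0}`. -/
def IsConeMetric (gM : RiemannianMetric I M)
    (gN : RiemannianMetric (I.prod 𝓘(ℝ)) (M × ↥Rpos)) : Prop :=
  ∀ p (v w : TangentSpace (I.prod 𝓘(ℝ)) p),
    gN.val p v w = ((p.2 : ℝ)) ^ 2 * gM.val p.1 v.1 w.1 + v.2 * w.2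

/-- `g_N` is the metric `g_M + ds²/s²` on `M × ℝ^{>0}`. -/
def IsCylinderMetric (gM : RiemannianMetric I M)
    (gN : RiemannianMetric (I.prod 𝓘(ℝ)) (M × ↥Rpos)) : Prop :=
  ∀ p (v w : TangentSpace (I.prod 𝓘(ℝ)) p),
    gN.val p v w = gM.val p.1 v.1 w.1 + v.2 * w.2 / ((p.2 : ℝ)) ^ 2

/-- `θ` is the 1-form `- 2 ds / s` on `M × ℝ^{>0}`. -/
def IsMinusTwoDsOverS (θ : OneForm (I.prod 𝓘(ℝ)) (M × ↥Rpos)) : Prop :=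
  ∀ p (v : TangentSpace (I.prod 𝓘(ℝ)) p), θ.val p v = -2 * v.2 / ((p.2 : ℝ))

variable (M) in
/-- The map `φ_q (m, t) = (φ m, q t)` on `M × ℝ^{>0}`. -/
def phiQ (φ : M → M) (q : ℝ) (hq : 0 < q) : M × ↥Rpos → M × ↥Rpos :=
  fun p => (φ p.1, ⟨q * (p.2 : ℝ), by exact mul_pos hq p.2.2⟩)

/-- Two points lie in the same orbit of the map `f`. -/
def SameOrbit {α : Type*} (f : α → α) (p p' : α) : Prop :=
  ∃ n : ℕ, f^[n] p = p' ∨ f^[n] p' = p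

/-- The period of the closed 1-form `θ` over the loop `γ`. -/
def period (θ : OneForm I M) (γ : ℝ → M) : ℝ :=
  ∫ t in (0:ℝ)..1, θ.val (γ t) (mfderiv 𝓘(ℝ) I γ t (show TangentSpace 𝓘(ℝ) t from (1:ℝ)))

/-- The group of periods of a closed 1-form: the subgroup of `ℝ` generated by the
integrals of `θ` over smooth loops.  This is the monodromy group of the weight
bundle, i.e. the image of the character `χ` (written additively). -/
def periodGroup (θ : OneForm I M) : AddSubgroup ℝ :=
  AddSubgroup.closure {p : ℝ | ∃ γ : ℝ → M, ContMDiff 𝓘(ℝ) I (⊤ : ℕ∞) γ ∧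
    (∀ t, γ (t + 1) = γ t) ∧ p = period θ γ}

/-- An l.c.H. structure has l.c.H. rank 1: the monodromy group of the weight bundle
(the group of periods of the Lee form) is an infinite cyclic (rank 1) subgroup. -/
def HasLcHRankOne (θ : OneForm I M) : Prop :=
  ∃ r : ℝ, r ≠ 0 ∧ periodGroup θ = AddSubgroup.zmultiples r

/-- The second covariant derivative (Hessian) of a function with respect to a
connection: `Hess φ (X,Y) = X (Y φ) - (∇_X Y) φ`. -/
def hessFn (C : Connection I M) (φ : M → ℝ) (X Y : VectorField I M) : M → ℝ :=
  fun x => dirDeriv I X (dirDeriv I Y φ) x - dirDeriv I (C.op X Y) φ x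

/-- The 1-form `ι_ξ g` is closed. -/
def IsClosedDualForm (g : RiemannianMetric I M) (ξ : VectorField I M) : Prop :=
  ∀ X Y B, IsSmoothVF I X → IsSmoothVF I Y → IsBracket I X Y B →
    ∀ x, dirDeriv I X (fun y => g.val y (ξ y) (Y y)) x
      - dirDeriv I Y (fun y => g.val y (ξ y) (X y)) x - g.val x (ξ x) (B x) = 0

/-- A Riemannian manifold is locally conformally flat: every point has an open
neighbourhood `U` and a positive smooth conformal factor `φ` on `U` such that
`φ · g` restricted to `U` is a flat Riemannian metric (i.e. it admits a torsion-free
metric-compatible connection with vanishing curvature). -/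
def IsLocallyConformallyFlat (g : RiemannianMetric I M) : Prop :=
  ∀ x : M, ∃ U : Opens M, x ∈ U ∧
    ∃ (gU : RiemannianMetric I U) (φ : U → ℝ) (D : Connection I U),
      IsSmoothF I φ ∧ (∀ u : U, 0 < φ u) ∧
      (∀ (u : U) (v w : TangentSpace I u), gU.val u v w = φ u * g.val (u : M) v w) ∧
      D.IsTorsionFree ∧ D.IsFlat ∧
      (∀ X Y Z, IsSmoothVF I X → IsSmoothVF I Y → IsSmoothVF I Z →
        covDerivMetric D gU X Y Z = fun _ => 0)

section Covering

variable {M' : Type*} [TopologicalSpace M'] [ChartedSpace H M'] [IsManifold I (⊤ : ℕ∞) M']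

/-- `(M', g')`, together with the covering map `pr` and the potential `f`, is a Hessian
covering of the l.c.H. manifold `(M, g, θ)`: `π` is a smooth covering map,
`df = π*θ`, and `g' = e^{-f} π*g`.  (The minimal Hessian covering is of this form.) -/
def IsHessianCovering (pr : M' → M) (g : RiemannianMetric I M) (θ : OneForm I M)
    (f : M' → ℝ) (g' : RiemannianMetric I M') : Prop :=
  IsCoveringMap pr ∧ ContMDiff I I (⊤ : ℕ∞) pr ∧ IsSmoothF I f ∧
    (∀ (x' : M') (v : TangentSpace I x'),
      mfderiv I 𝓘(ℝ) f x' v = θ.val (pr x') (mfderiv I I pr x' v)) ∧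
    (∀ (x' : M') (v w : TangentSpace I x'),
      g'.val x' v w
        = Real.exp (-(f x')) * g.val (pr x') (mfderiv I I pr x' v) (mfderiv I I pr x' w))

end Covering


/-- Let `(M, ∇, g, θ)` be a compact radiant l.c.H. manifold with Lee
vector field `ξ`, `∇ ξ = μ · Id` and `a = g(ξ,ξ)`.  Set `u = -μ - a`.  Then `u ≠ 0`
and `u g = ∇θ - θ ⊗ θ`. -/
theorem statement14 [CompactSpace M] (A : Connection I M) (g : RiemannianMetric I M)
    (θ : OneForm I M) (ξ : VectorField I M) (a μ : ℝ)
    (h : IsRadiantLcH A g θ ξ a μ) :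
    -μ - a ≠ 0 ∧
      ∀ X Y, IsSmoothVF I X → IsSmoothVF I Y → ∀ x,
        (-μ - a) * g.val x (X x) (Y x)
          = covDerivOneForm A θ X Y x - θ.val x (X x) * θ.val x (Y x) := by
  obtain ⟨⟨⟨hTF, hFlat⟩, hclosed, hsym⟩, ⟨hξs, hdual⟩, hkill, ha, hμ0, hμa, hnabla⟩ := h
  refine ⟨fun h0 => hμa (by linarith), ?_⟩
  intro X Y hX hY x
  have gsub : ∀ (u v w : TangentSpace I x),
      g.val x (u - v) w = g.val x u w - g.val x v w := by
    intro u v w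
    rw [sub_eq_add_neg, g.add_left, ← neg_one_smul ℝ v, g.smul_left]; ring
  have hBX := hTF ξ X hξs hX
  have hBY := hTF ξ Y hξs hY
  have hK := hkill X Y _ _ hX hY hBX hBY x
  have hS := congrFun ((hsym X ξ Y hX hξs hY).1) x
  have hfun : (fun y => g.val y (ξ y) (Y y)) = fun y => θ.val y (Y y) :=
    funext fun y => hdual y (Y y)
  have hXξ : A.op X ξ x = μ • X x := congrFun (hnabla X hX) x
  have hYξ : A.op Y ξ x = μ • Y x := congrFun (hnabla Y hY) x
  have hθξ : θ.val x (ξ x) = a := by rw [← hdual x (ξ x)]; exact ha x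
  simp only [covDerivMetric] at hS
  rw [hfun, hXξ, g.smul_left, hdual x (A.op X Y x), hθξ, hdual x (Y x)] at hS
  rw [hXξ, hYξ, gsub] at hK
  rw [g.symm x (X x) (A.op ξ Y x - μ • Y x), gsub, g.smul_left, g.smul_left,
    g.symm x (A.op ξ Y x) (X x), g.symm x (Y x) (X x)] at hK
  rw [hK] at hS
  simp only [covDerivOneForm]
  set D1 := dirDeriv I X (fun y => θ.val y (Y y)) x
  set G := g.val x (X x) (Y x)
  set p := g.val x (A.op ξ X x) (Y x)
  set q := g.val x (X x) (A.op ξ Y x)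
  set t := θ.val x (A.op X Y x)
  set tX := θ.val x (X x)
  set tY := θ.val x (Y x)
  linarith

end LCH
end
end

section
/- Let (C,∇) be a flat affine manifold and θ a closed 1-form on C such that the bilinear form g_θ := ∇θ − θ⊗θ is positive definite, where (∇θ)(X,Y) = X(θ(Y)) − θ(∇_X Y). Then (C, ∇, g_θ, θ) is an l.c.H. manifold. -/
open Bundle Set TopologicalSpace
open scoped Manifold Topology

noncomputable section

namespace LCH

variable {E : Type*} [NormedAddCommGroup E] [NormedSpace ℝ E]
  {H : Type*} [TopologicalSpace H] (I : ModelWithCorners ℝ E H)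
  (M : Type*) [TopologicalSpace M] [ChartedSpace H M] [IsManifold I (⊤ : ℕ∞) M]

variable {M}

variable (M)

variable {I M}

private lemma mdiff_of_smooth {f : M → ℝ} (hf : IsSmoothF I f) (x : M) :
    MDifferentiableAt I 𝓘(ℝ) f x :=
  (hf.mdifferentiable (by simp)) x

/-- Expansion of the directional derivative of `f - t - b*c`. -/
private lemma dirDeriv_gcomb (X : VectorField I M) (f t b c : M → ℝ) (x : M)
    (f' t' b' c' : TangentSpace I x →L[ℝ] ℝ)
    (hf : HasMFDerivAt I 𝓘(ℝ) f x f') (ht : HasMFDerivAt I 𝓘(ℝ) t x t')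
    (hb : HasMFDerivAt I 𝓘(ℝ) b x b') (hc : HasMFDerivAt I 𝓘(ℝ) c x c') :
    dirDeriv I X (fun y => f y - t y - b y * c y) x
      = f' (X x) - t' (X x) - (b x * c' (X x) + c x * b' (X x)) := by
  have H : HasMFDerivAt I 𝓘(ℝ) (fun y => f y - t y - b y * c y) x
      (f' - t' - (b x • c' + b'.smulRight (c x))) := (hf.sub ht).sub (hb.mul' hc)
  have h1 : dirDeriv I X (fun y => f y - t y - b y * c y) x
      = (f' - t' - (b x • c' + b'.smulRight (c x))) (X x) :=
    congrArg (fun L : TangentSpace I x →L[ℝ] ℝ => L (X x)) H.mfderiv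
  rw [h1]
  simp only [ContinuousLinearMap.coe_sub', Pi.sub_apply, ContinuousLinearMap.add_apply,
    ContinuousLinearMap.coe_smul', Pi.smul_apply, ContinuousLinearMap.smulRight_apply,
    smul_eq_mul]
  ring

/-- Let `(M, ∇)` be a flat affine manifold and `θ` a closed 1-form
such that the bilinear form `g_θ := ∇θ - θ ⊗ θ` is positive definite (i.e., it is the
value of a Riemannian metric `g`).  Then `(M, ∇, g_θ, θ)` is an l.c.H. manifold. -/
theorem statement15 (A : Connection I M) (hA : A.IsFlatAffine) (θ : OneForm I M)
    (hθ : θ.IsClosed) (g : RiemannianMetric I M)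
    (hg : ∀ X Y, IsSmoothVF I X → IsSmoothVF I Y → ∀ x,
      g.val x (X x) (Y x) = covDerivOneForm A θ X Y x - θ.val x (X x) * θ.val x (Y x)) :
    IsLcH A g θ := by
  refine ⟨hA, hθ, ?_⟩
  intro X Y Z hX hY hZ
  constructor
  · -- symmetry in X, Y
    funext x
    simp only [covDerivMetric]
    -- smooth vector fields
    have hXY : IsSmoothVF I (A.op X Y) := A.smooth X Y hX hY
    have hYX : IsSmoothVF I (A.op Y X) := A.smooth Y X hY hX
    have hXZ : IsSmoothVF I (A.op X Z) := A.smooth X Z hX hZ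
    have hYZ' : IsSmoothVF I (A.op Y Z) := A.smooth Y Z hY hZ
    -- smooth functions
    have hcZ : IsSmoothF I (fun z => θ.val z (Z z)) := θ.smooth Z hZ
    have ha : IsSmoothF I (fun y => θ.val y (X y)) := θ.smooth X hX
    have hb : IsSmoothF I (fun y => θ.val y (Y y)) := θ.smooth Y hY
    have htYZ : IsSmoothF I (fun y => θ.val y (A.op Y Z y)) := θ.smooth _ hYZ'
    have htXZ : IsSmoothF I (fun y => θ.val y (A.op X Z y)) := θ.smooth _ hXZ
    -- the first directional derivative of θ(Z) is smooth
    have hDY : dirDeriv I Y (fun z => θ.val z (Z z))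
        = fun y => g.val y (Y y) (Z y) + θ.val y (A.op Y Z y)
            + θ.val y (Y y) * θ.val y (Z y) := by
      funext y
      have h := hg Y Z hY hZ y
      simp only [covDerivOneForm] at h
      linarith
    have hDX : dirDeriv I X (fun z => θ.val z (Z z))
        = fun y => g.val y (X y) (Z y) + θ.val y (A.op X Z y)
            + θ.val y (X y) * θ.val y (Z y) := by
      funext y
      have h := hg X Z hX hZ y
      simp only [covDerivOneForm] at h
      linarith
    have hDYs : IsSmoothF I (dirDeriv I Y (fun z => θ.val z (Z z))) := by
      rw [hDY]
      exact ((g.smooth Y Z hY hZ).add htYZ).add (hb.mul hcZ)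
    have hDXs : IsSmoothF I (dirDeriv I X (fun z => θ.val z (Z z))) := by
      rw [hDX]
      exact ((g.smooth X Z hX hZ).add htXZ).add (ha.mul hcZ)
    -- θ is pointwise additive on differences
    have θsub : ∀ u v : TangentSpace I x, θ.val x (u - v) = θ.val x u - θ.val x v := by
      intro u v
      have h1 := θ.add x (u - v) v
      rw [sub_add_cancel] at h1
      linarith
    -- expansions of the metric functions
    have hgfY : (fun y => g.val y (Y y) (Z y))
        = fun y => dirDeriv I Y (fun z => θ.val z (Z z)) y - θ.val y (A.op Y Z y)
            - θ.val y (Y y) * θ.val y (Z y) := by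
      funext y
      have h := hg Y Z hY hZ y
      simp only [covDerivOneForm] at h
      linarith
    have hgfX : (fun y => g.val y (X y) (Z y))
        = fun y => dirDeriv I X (fun z => θ.val z (Z z)) y - θ.val y (A.op X Z y)
            - θ.val y (X y) * θ.val y (Z y) := by
      funext y
      have h := hg X Z hX hZ y
      simp only [covDerivOneForm] at h
      linarith
    -- main derivative expansions
    have e1 : dirDeriv I X (fun y => g.val y (Y y) (Z y)) x
        = dirDeriv I X (dirDeriv I Y (fun z => θ.val z (Z z))) x
          - dirDeriv I X (fun y => θ.val y (A.op Y Z y)) x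
          - (θ.val x (Y x) * dirDeriv I X (fun z => θ.val z (Z z)) x
             + θ.val x (Z x) * dirDeriv I X (fun y => θ.val y (Y y)) x) := by
      rw [hgfY]
      exact dirDeriv_gcomb X _ _ _ _ x _ _ _ _
        (mdiff_of_smooth hDYs x).hasMFDerivAt (mdiff_of_smooth htYZ x).hasMFDerivAt
        (mdiff_of_smooth hb x).hasMFDerivAt (mdiff_of_smooth hcZ x).hasMFDerivAt
    have e2 : dirDeriv I Y (fun y => g.val y (X y) (Z y)) x
        = dirDeriv I Y (dirDeriv I X (fun z => θ.val z (Z z))) x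
          - dirDeriv I Y (fun y => θ.val y (A.op X Z y)) x
          - (θ.val x (X x) * dirDeriv I Y (fun z => θ.val z (Z z)) x
             + θ.val x (Z x) * dirDeriv I Y (fun y => θ.val y (X y)) x) := by
      rw [hgfX]
      exact dirDeriv_gcomb Y _ _ _ _ x _ _ _ _
        (mdiff_of_smooth hDXs x).hasMFDerivAt (mdiff_of_smooth htXZ x).hasMFDerivAt
        (mdiff_of_smooth ha x).hasMFDerivAt (mdiff_of_smooth hcZ x).hasMFDerivAt
    -- metric values via hg
    have e3 : g.val x (A.op X Y x) (Z x)
        = dirDeriv I (A.op X Y) (fun z => θ.val z (Z z)) x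
          - θ.val x (A.op (A.op X Y) Z x) - θ.val x (A.op X Y x) * θ.val x (Z x) := by
      have h := hg (A.op X Y) Z hXY hZ x
      simp only [covDerivOneForm] at h
      linarith
    have e4 : g.val x (A.op Y X x) (Z x)
        = dirDeriv I (A.op Y X) (fun z => θ.val z (Z z)) x
          - θ.val x (A.op (A.op Y X) Z x) - θ.val x (A.op Y X x) * θ.val x (Z x) := by
      have h := hg (A.op Y X) Z hYX hZ x
      simp only [covDerivOneForm] at h
      linarith
    have e5 : g.val x (Y x) (A.op X Z x)
        = dirDeriv I Y (fun y => θ.val y (A.op X Z y)) x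
          - θ.val x (A.op Y (A.op X Z) x) - θ.val x (Y x) * θ.val x (A.op X Z x) := by
      have h := hg Y (A.op X Z) hY hXZ x
      simp only [covDerivOneForm] at h
      linarith
    have e6 : g.val x (X x) (A.op Y Z x)
        = dirDeriv I X (fun y => θ.val y (A.op Y Z y)) x
          - θ.val x (A.op X (A.op Y Z) x) - θ.val x (X x) * θ.val x (A.op Y Z x) := by
      have h := hg X (A.op Y Z) hX hYZ' x
      simp only [covDerivOneForm] at h
      linarith
    have e7 : θ.val x (X x) * g.val x (Y x) (Z x)
        = θ.val x (X x) * dirDeriv I Y (fun z => θ.val z (Z z)) x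
          - θ.val x (X x) * θ.val x (A.op Y Z x)
          - θ.val x (X x) * (θ.val x (Y x) * θ.val x (Z x)) := by
      have h := hg Y Z hY hZ x
      simp only [covDerivOneForm] at h
      rw [h]; ring
    have e8 : θ.val x (Y x) * g.val x (X x) (Z x)
        = θ.val x (Y x) * dirDeriv I X (fun z => θ.val z (Z z)) x
          - θ.val x (Y x) * θ.val x (A.op X Z x)
          - θ.val x (Y x) * (θ.val x (X x) * θ.val x (Z x)) := by
      have h := hg X Z hX hZ x
      simp only [covDerivOneForm] at h
      rw [h]; ring
    -- the bracket of X and Y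
    have hB : IsBracket I X Y (fun y => A.op X Y y - A.op Y X y) := hA.1 X Y hX hY
    have e9 : dirDeriv I (fun y => A.op X Y y - A.op Y X y) (fun z => θ.val z (Z z)) x
        = dirDeriv I X (dirDeriv I Y (fun z => θ.val z (Z z))) x
          - dirDeriv I Y (dirDeriv I X (fun z => θ.val z (Z z))) x :=
      congrFun (hB (fun z => θ.val z (Z z)) hcZ) x
    have e10 : dirDeriv I (fun y => A.op X Y y - A.op Y X y) (fun z => θ.val z (Z z)) x
        = dirDeriv I (A.op X Y) (fun z => θ.val z (Z z)) x
          - dirDeriv I (A.op Y X) (fun z => θ.val z (Z z)) x := by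
      show mfderiv I 𝓘(ℝ) (fun z => θ.val z (Z z)) x (A.op X Y x - A.op Y X x) = _
      exact (mfderiv I 𝓘(ℝ) (fun z => θ.val z (Z z)) x).map_sub _ _
    -- closedness of θ
    have e11 : dirDeriv I X (fun y => θ.val y (Y y)) x
        - dirDeriv I Y (fun y => θ.val y (X y)) x
        - (θ.val x (A.op X Y x) - θ.val x (A.op Y X x)) = 0 := by
      rw [← θsub]
      exact hθ X Y (fun y => A.op X Y y - A.op Y X y) hX hY hB x
    -- the covariant derivative of the bracket
    have e13v : A.op (fun y => A.op X Y y - A.op Y X y) Z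
        = fun y => A.op (A.op X Y) Z y - A.op (A.op Y X) Z y := by
      have h0 : (fun y => A.op X Y y - A.op Y X y)
          = fun y => A.op X Y y + (-1 : ℝ) • A.op Y X y := by
        funext y
        module
      rw [h0, A.add_left, A.fsmul_left (fun _ => (-1 : ℝ))]
      funext y
      show A.op (A.op X Y) Z y + (-1 : ℝ) • A.op (A.op Y X) Z y
        = A.op (A.op X Y) Z y - A.op (A.op Y X) Z y
      module
    have e13 : θ.val x (A.op (fun y => A.op X Y y - A.op Y X y) Z x)
        = θ.val x (A.op (A.op X Y) Z x) - θ.val x (A.op (A.op Y X) Z x) := by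
      rw [e13v]
      exact θsub _ _
    -- flatness
    have e12 : θ.val x (A.op X (A.op Y Z) x)
        = θ.val x (A.op Y (A.op X Z) x)
          + θ.val x (A.op (fun y => A.op X Y y - A.op Y X y) Z x) := by
      have h := hA.2 X Y Z (fun y => A.op X Y y - A.op Y X y) hX hY hZ hB x
      rw [sub_sub, sub_eq_zero] at h
      rw [h, θ.add]
    linear_combination e1 - e2 - e3 + e4 - e5 + e6 - e7 + e8 - e9 + e10 - e12 - e13
      - θ.val x (Z x) * e11
  · -- symmetry in Y, Z
    funext x
    simp only [covDerivMetric]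
    have hsymm : (fun y => g.val y (Y y) (Z y)) = fun y => g.val y (Z y) (Y y) :=
      funext fun y => g.symm y _ _
    rw [hsymm]
    linear_combination (- g.symm x (A.op X Y x) (Z x)) - g.symm x (Y x) (A.op X Z x)
      + θ.val x (X x) * g.symm x (Z x) (Y x)

end LCH
end
end

section
/- Let (C,∇,g,θ) be a compact radiant l.c.H. manifold with Lee vector field ξ, ∇ξ = μ·Id for a constant μ, and a = g(ξ,ξ). Suppose −μ − a > 0. Then ∇θ is positive definite and (C, ∇, ∇θ) is a Hessian manifold of Koszul type. -/
open Bundle Set TopologicalSpace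
open scoped Manifold Topology

noncomputable section

namespace LCH

variable {E : Type*} [NormedAddCommGroup E] [NormedSpace ℝ E]
  {H : Type*} [TopologicalSpace H] (I : ModelWithCorners ℝ E H)
  (M : Type*) [TopologicalSpace M] [ChartedSpace H M] [IsManifold I (⊤ : ℕ∞) M]

variable {M}

variable (M)

variable {I M}

section Statement17Aux

variable {A : Connection I M} {g : RiemannianMetric I M} {θ : OneForm I M}

lemma g_smul_right (g : RiemannianMetric I M) (x : M) (c : ℝ) (u v : TangentSpace I x) :
    g.val x u (c • v) = c * g.val x u v := by
  rw [g.symm, g.smul_left, g.symm]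

lemma g_sub_left (g : RiemannianMetric I M) (x : M) (u v w : TangentSpace I x) :
    g.val x (u - v) w = g.val x u w - g.val x v w := by
  have h : u - v = u + (-1 : ℝ) • v := by rw [neg_one_smul]; exact sub_eq_add_neg u v
  rw [h, g.add_left, g.smul_left]; ring

lemma g_sub_right (g : RiemannianMetric I M) (x : M) (u v w : TangentSpace I x) :
    g.val x u (v - w) = g.val x u v - g.val x u w := by
  rw [g.symm, g_sub_left, g.symm x v u, g.symm x w u]

/-- The key pointwise formula: for a radiant l.c.H. structure,
`(∇θ)(X,Y) = (-μ-a) g(X,Y) + θ(X) θ(Y)`. -/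
lemma covDerivOneForm_eq {ξ : VectorField I M} {a μ : ℝ}
    (h : IsRadiantLcH A g θ ξ a μ) (X Y : VectorField I M)
    (hX : IsSmoothVF I X) (hY : IsSmoothVF I Y) (x : M) :
    covDerivOneForm A θ X Y x
      = (-μ - a) * g.val x (X x) (Y x) + θ.val x (X x) * θ.val x (Y x) := by
  obtain ⟨hlch, hlee, hkill, ha, -, -, hnab⟩ := h
  obtain ⟨⟨hTF, -⟩, -, hsym⟩ := hlch
  obtain ⟨hξs, hθg⟩ := hlee
  have hBX := hTF ξ X hξs hX
  have hBY := hTF ξ Y hξs hY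
  have hK := hkill X Y _ _ hX hY hBX hBY x
  beta_reduce at hK
  have hnXx : A.op X ξ x = μ • X x := congrFun (hnab X hX) x
  have hnYx : A.op Y ξ x = μ • Y x := congrFun (hnab Y hY) x
  have e1 : g.val x (A.op ξ X x - A.op X ξ x) (Y x)
      = g.val x (A.op ξ X x) (Y x) - μ * g.val x (X x) (Y x) := by
    rw [g_sub_left, hnXx, g.smul_left]
  have e2 : g.val x (X x) (A.op ξ Y x - A.op Y ξ x)
      = g.val x (X x) (A.op ξ Y x) - μ * g.val x (X x) (Y x) := by
    rw [g_sub_right, hnYx, g_smul_right]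
  have hcm : covDerivMetric A g ξ X Y x = -(2 * μ) * g.val x (X x) (Y x) := by
    unfold covDerivMetric
    rw [hK, e1, e2]; ring
  have hfun : (fun y => θ.val y (Y y)) = (fun y => g.val y (ξ y) (Y y)) :=
    funext fun y => (hθg y (Y y)).symm
  have hf : covDerivOneForm A θ X Y x
      = covDerivMetric A g X ξ Y x + μ * g.val x (X x) (Y x) := by
    unfold covDerivOneForm covDerivMetric
    rw [hfun, ← hθg x (A.op X Y x), hnXx, g.smul_left]
    ring
  have hS := congrFun (hsym X ξ Y hX hξs hY).1 x
  beta_reduce at hS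
  have hge : g.val x (ξ x) (Y x) = θ.val x (Y x) := hθg x (Y x)
  have hθξ : θ.val x (ξ x) = a := by rw [← hθg x (ξ x)]; exact ha x
  rw [hge, hθξ, hcm] at hS
  rw [hf]
  linear_combination hS

/-- Leibniz rule for directional derivatives of `c·u + v·w`. -/
lemma dirDeriv_combo (c : ℝ) (X : VectorField I M) (u v w : M → ℝ)
    (hu : IsSmoothF I u) (hv : IsSmoothF I v) (hw : IsSmoothF I w) (x : M) :
    dirDeriv I X (fun y => c * u y + v y * w y) x
      = c * dirDeriv I X u x + v x * dirDeriv I X w x + w x * dirDeriv I X v x := by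
  have Hu := ((hu x).mdifferentiableAt (by simp)).hasMFDerivAt
  have Hv := ((hv x).mdifferentiableAt (by simp)).hasMFDerivAt
  have Hw := ((hw x).mdifferentiableAt (by simp)).hasMFDerivAt
  have H := (Hu.const_smul c).add (Hv.mul Hw)
  have heq : (c • u + v * w) = (fun y => c * u y + v y * w y) := by
    funext y
    simp [Pi.add_apply, Pi.smul_apply, Pi.mul_apply, smul_eq_mul]
  rw [heq] at H
  unfold dirDeriv
  rw [H.mfderiv]
  exact (add_assoc _ _ _).symm

end Statement17Aux

/-- Let `(M, ∇, g, θ)` be a compact radiant l.c.H. manifold with Lee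
vector field `ξ`, `∇ ξ = μ · Id`, `a = g(ξ,ξ)`, and suppose `-μ - a > 0`.  Then `∇θ`
is positive definite and `(M, ∇, ∇θ)` is a Hessian manifold of Koszul type. -/
theorem statement17 [CompactSpace M] (A : Connection I M) (g : RiemannianMetric I M)
    (θ : OneForm I M) (ξ : VectorField I M) (a μ : ℝ)
    (h : IsRadiantLcH A g θ ξ a μ) (hpos : 0 < -μ - a) :
    ∃ g' : RiemannianMetric I M,
      (∀ X Y, IsSmoothVF I X → IsSmoothVF I Y → ∀ x,
        g'.val x (X x) (Y x) = covDerivOneForm A θ X Y x) ∧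
      IsHessian A g' := by
  obtain ⟨hlch, hlee, hkill, ha, hμ0, hμa, hnab⟩ := h
  obtain ⟨hfa, hclosed, hsym⟩ := hlch
  obtain ⟨hξs, hθg⟩ := hlee
  set c : ℝ := -μ - a with hc
  have key := covDerivOneForm_eq (A := A) (g := g) (θ := θ)
    ⟨⟨hfa, hclosed, hsym⟩, ⟨hξs, hθg⟩, hkill, ha, hμ0, hμa, hnab⟩
  refine ⟨⟨fun x v w => c * g.val x v w + θ.val x v * θ.val x w, ?_, ?_, ?_, ?_, ?_⟩,
    ?_, ?_, ?_⟩
  · intro X Y hX hY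
    exact (contMDiff_const.mul (g.smooth X Y hX hY)).add
      ((θ.smooth X hX).mul (θ.smooth Y hY))
  · intro x u v; beta_reduce; rw [g.symm]; ring
  · intro x u u' v; beta_reduce; rw [g.add_left, θ.add]; ring
  · intro x r u v; beta_reduce; rw [g.smul_left, θ.smul]; ring
  · intro x v hv
    beta_reduce
    have h1 := g.posdef x v hv
    nlinarith [mul_self_nonneg (θ.val x v)]
  · intro X Y hX hY x
    exact (key X Y hX hY x).symm
  · exact hfa
  · -- total symmetry of ∇g'
    have F : ∀ X Y Z, IsSmoothVF I X → IsSmoothVF I Y → IsSmoothVF I Z → ∀ x,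
        (fun x => dirDeriv I X
            (fun y => c * g.val y (Y y) (Z y) + θ.val y (Y y) * θ.val y (Z y)) x
          - (c * g.val x (A.op X Y x) (Z x) + θ.val x (A.op X Y x) * θ.val x (Z x))
          - (c * g.val x (Y x) (A.op X Z x) + θ.val x (Y x) * θ.val x (A.op X Z x))) x
        = c * covDerivMetric A g X Y Z x
          + θ.val x (Z x) * (c * g.val x (X x) (Y x) + θ.val x (X x) * θ.val x (Y x))
          + θ.val x (Y x) * (c * g.val x (X x) (Z x) + θ.val x (X x) * θ.val x (Z x)) := by
      intro X Y Z hX hY hZ x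
      have hdd := dirDeriv_combo c X (fun y => g.val y (Y y) (Z y))
        (fun y => θ.val y (Y y)) (fun y => θ.val y (Z y))
        (g.smooth Y Z hY hZ) (θ.smooth Y hY) (θ.smooth Z hZ) x
      have k1 := key X Y hX hY x
      have k2 := key X Z hX hZ x
      unfold covDerivOneForm at k1 k2
      unfold covDerivMetric
      beta_reduce
      rw [hdd]
      linear_combination θ.val x (Z x) * k1 + θ.val x (Y x) * k2
    intro X Y Z hX hY hZ
    constructor
    · funext x
      have h1 := F X Y Z hX hY hZ x
      have h2 := F Y X Z hY hX hZ x
      have hS := congrFun (hsym X Y Z hX hY hZ).1 x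
      beta_reduce at hS h1 h2 ⊢
      unfold covDerivMetric at h1 h2 hS ⊢
      beta_reduce at h1 h2 ⊢
      rw [h1, h2]
      linear_combination c * hS + c * θ.val x (Z x) * g.symm x (X x) (Y x)
    · funext x
      have h1 := F X Y Z hX hY hZ x
      have h2 := F X Z Y hX hZ hY x
      have hS := congrFun (hsym X Y Z hX hY hZ).2 x
      beta_reduce at hS h1 h2 ⊢
      unfold covDerivMetric at h1 h2 hS ⊢
      beta_reduce at h1 h2 ⊢
      rw [h1, h2]
      linear_combination c * hS + c * θ.val x (X x) * g.symm x (Y x) (Z x)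


end LCH
end
end
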